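/- Let B₁, B₂ ∈ ℝ^{k×d} have orthonormal rows and let T ⊆ ℝ^d be a subspace with dim T ≥ k. Then for every k×k orthogonal matrix U: |cangle(rowspace(B₁), T) − cangle(rowspace(B₂), T)| ≤ ‖U B₁ − B₂‖₂. Consequently, |cangle(rowspace(B₁), T) − cangle(rowspace(B₂), T)| ≤ d(B₁, B₂), where d(B₁, B₂) := inf{‖U B₁ − B₂‖₂ : U ∈ ℝ^{k×k} orthogonal}. -/

import Mathlib

open Matrix Filter

noncomputable section

/-- View a plain vector as an element of Euclidean space. -/
def toE {n : ℕ} (x : Fin n → ℝ) : EuclideanSpace ℝ (Fin n) := WithLp.toLp 2 x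

/-- Euclidean (ℓ2) norm of a vector. -/
def enorm2 {n : ℕ} (x : Fin n → ℝ) : ℝ := ‖toE x‖

/-- Spectral (ℓ2 operator) norm of a matrix. -/
def specNorm {m n : ℕ} (M : Matrix (Fin m) (Fin n) ℝ) : ℝ :=
  sSup {c | ∃ x : Fin n → ℝ, enorm2 x = 1 ∧ c = enorm2 (M.mulVec x)}

/-- Row space of a matrix, as a subspace of Euclidean space. -/
def rowspace {k d : ℕ} (B : Matrix (Fin k) (Fin d) ℝ) :
    Submodule ℝ (EuclideanSpace ℝ (Fin d)) :=
  Submodule.span ℝ (Set.range fun i => toE (B i))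

/-- Cosine of the largest principal angle between subspaces `R` and `T` of `ℝ^d`. -/
def cangle {d : ℕ} (R T : Submodule ℝ (EuclideanSpace ℝ (Fin d))) : ℝ :=
  sInf {c | ∃ r ∈ R, ‖r‖ = 1 ∧ c = ‖(T.orthogonalProjectionOnto r : EuclideanSpace ℝ (Fin d))‖}

/-- Feature-extractor distance: `d(B₁, B₂) = inf {‖U B₁ − B₂‖₂ : U orthogonal}`. -/
def fdist {k d : ℕ} (B₁ B₂ : Matrix (Fin k) (Fin d) ℝ) : ℝ :=
  sInf {c | ∃ U : Matrix (Fin k) (Fin k) ℝ, Uᵀ * U = 1 ∧ c = specNorm (U * B₁ - B₂)}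

open RealInnerProductSpace

lemma inner_toE {n : ℕ} (x y : Fin n → ℝ) : ⟪toE x, toE y⟫ = x ⬝ᵥ y := by
  simp [toE, PiLp.inner_apply, dotProduct, mul_comm]

lemma enorm2_sq {n : ℕ} (x : Fin n → ℝ) : enorm2 x ^ 2 = x ⬝ᵥ x := by
  rw [← inner_toE, real_inner_self_eq_norm_sq]; rfl

lemma enorm2_nonneg {n : ℕ} (x : Fin n → ℝ) : 0 ≤ enorm2 x := norm_nonneg _

lemma enorm2_smul {n : ℕ} (a : ℝ) (v : Fin n → ℝ) : enorm2 (a • v) = |a| * enorm2 v := by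
  rw [enorm2, show toE (a • v) = a • toE v from rfl, norm_smul]; rfl

lemma specSet_bddAbove {m n : ℕ} (M : Matrix (Fin m) (Fin n) ℝ) :
    BddAbove {c | ∃ x : Fin n → ℝ, enorm2 x = 1 ∧ c = enorm2 (M.mulVec x)} := by
  refine ⟨‖LinearMap.toContinuousLinearMap (Matrix.toEuclideanLin M)‖, ?_⟩
  rintro c ⟨x, hx, rfl⟩
  have h := (LinearMap.toContinuousLinearMap (Matrix.toEuclideanLin M)).le_opNorm (toE x)
  have hx' : ‖toE x‖ = 1 := hx
  have he : (LinearMap.toContinuousLinearMap (Matrix.toEuclideanLin M)) (toE x)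
      = toE (M.mulVec x) := rfl
  rw [he, hx', mul_one] at h
  exact h

lemma le_specNorm {m n : ℕ} (M : Matrix (Fin m) (Fin n) ℝ) (x : Fin n → ℝ)
    (hx : enorm2 x = 1) : enorm2 (M.mulVec x) ≤ specNorm M :=
  le_csSup (specSet_bddAbove M) ⟨x, hx, rfl⟩

lemma specNorm_nonneg {m n : ℕ} (M : Matrix (Fin m) (Fin n) ℝ) : 0 ≤ specNorm M :=
  Real.sSup_nonneg (by rintro c ⟨x, hx, rfl⟩; exact enorm2_nonneg _)

lemma enorm2_transpose_mulVec_le {m n : ℕ} (M : Matrix (Fin m) (Fin n) ℝ) (c : Fin m → ℝ)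
    (hc : enorm2 c = 1) : enorm2 (Mᵀ *ᵥ c) ≤ specNorm M := by
  set y := Mᵀ *ᵥ c with hy
  by_cases h0 : enorm2 y = 0
  · rw [h0]; exact specNorm_nonneg M
  have hy0 : 0 < enorm2 y := lt_of_le_of_ne (enorm2_nonneg y) (Ne.symm h0)
  set x : Fin n → ℝ := (enorm2 y)⁻¹ • y with hx
  have hx1 : enorm2 x = 1 := by
    rw [hx, enorm2_smul, abs_of_pos (inv_pos.mpr hy0)]
    exact inv_mul_cancel₀ (ne_of_gt hy0)
  have hMy : M *ᵥ y = enorm2 y • (M *ᵥ x) := by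
    rw [hx, mulVec_smul, smul_smul, mul_inv_cancel₀ (ne_of_gt hy0), one_smul]
  have h1 : enorm2 y ^ 2 = c ⬝ᵥ (M *ᵥ y) := by
    rw [enorm2_sq, dotProduct_mulVec c M y, ← mulVec_transpose]
  have h2 : c ⬝ᵥ (M *ᵥ y) ≤ enorm2 (M *ᵥ y) := by
    have h := real_inner_le_norm (toE c) (toE (M *ᵥ y))
    rw [inner_toE] at h
    have hc' : ‖toE c‖ = 1 := hc
    rw [hc', one_mul] at h
    exact h
  have h3 : enorm2 (M *ᵥ y) = enorm2 y * enorm2 (M *ᵥ x) := by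
    rw [hMy, enorm2_smul, abs_of_pos hy0]
  have h4 : enorm2 (M *ᵥ x) ≤ specNorm M := le_specNorm M x hx1
  nlinarith [h1, h2, h3, h4, hy0]

lemma sum_smul_rows {k d : ℕ} (B : Matrix (Fin k) (Fin d) ℝ) (c : Fin k → ℝ) :
    (∑ i, c i • toE (B i)) = toE (Bᵀ *ᵥ c) := by
  have heq : (∑ i, c i • B i) = Bᵀ *ᵥ c := by
    funext j
    simp [Matrix.mulVec, dotProduct, Finset.sum_apply, mul_comm]
  calc (∑ i, c i • toE (B i))
      = toE (∑ i, c i • B i) := by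
        induction' (Finset.univ : Finset (Fin k)) using Finset.induction with a s ha ih
        · rfl
        · rw [Finset.sum_insert ha, Finset.sum_insert ha]; rw [ih]; rfl
    _ = toE (Bᵀ *ᵥ c) := by rw [heq]

lemma mem_rowspace {k d : ℕ} {B : Matrix (Fin k) (Fin d) ℝ} {r : EuclideanSpace ℝ (Fin d)} :
    r ∈ rowspace B ↔ ∃ c : Fin k → ℝ, r = toE (Bᵀ *ᵥ c) := by
  rw [rowspace, Finsupp.mem_span_range_iff_exists_finsupp]
  constructor
  · rintro ⟨c, hc⟩
    exact ⟨c, by rw [← hc, ← sum_smul_rows, Finsupp.sum_fintype] <;> simp⟩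
  · rintro ⟨c, rfl⟩
    refine ⟨Finsupp.equivFunOnFinite.symm c, ?_⟩
    rw [← sum_smul_rows, Finsupp.sum_fintype] <;> simp

lemma enorm2_mulVec_orth {k d : ℕ} (B : Matrix (Fin k) (Fin d) ℝ) (h : B * Bᵀ = 1)
    (c : Fin k → ℝ) : enorm2 (Bᵀ *ᵥ c) = enorm2 c := by
  have hdot : (Bᵀ *ᵥ c) ⬝ᵥ (Bᵀ *ᵥ c) = c ⬝ᵥ c := by
    rw [dotProduct_mulVec, mulVec_transpose, vecMul_vecMul, h, vecMul_one]
  have h1 : enorm2 (Bᵀ *ᵥ c) ^ 2 = enorm2 c ^ 2 := by rw [enorm2_sq, enorm2_sq, hdot]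
  have := enorm2_nonneg (Bᵀ *ᵥ c)
  have := enorm2_nonneg c
  nlinarith [h1]


lemma proj_norm_le {d : ℕ} (T : Submodule ℝ (EuclideanSpace ℝ (Fin d)))
    (v : EuclideanSpace ℝ (Fin d)) :
    ‖(T.orthogonalProjectionOnto v : EuclideanSpace ℝ (Fin d))‖ ≤ ‖v‖ := by
  have h := (T.orthogonalProjectionOnto).le_opNorm v
  have h2 := Submodule.orthogonalProjectionOnto_norm_le T
  calc ‖(T.orthogonalProjectionOnto v : EuclideanSpace ℝ (Fin d))‖
      = ‖T.orthogonalProjectionOnto v‖ := rfl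
    _ ≤ ‖T.orthogonalProjectionOnto‖ * ‖v‖ := h
    _ ≤ 1 * ‖v‖ := by gcongr
    _ = ‖v‖ := one_mul _

lemma proj_lip {d : ℕ} (T : Submodule ℝ (EuclideanSpace ℝ (Fin d)))
    (a b : EuclideanSpace ℝ (Fin d)) :
    ‖(T.orthogonalProjectionOnto a : EuclideanSpace ℝ (Fin d))‖ ≤
      ‖(T.orthogonalProjectionOnto b : EuclideanSpace ℝ (Fin d))‖ + ‖a - b‖ := by
  have h1 : ‖(T.orthogonalProjectionOnto a : EuclideanSpace ℝ (Fin d))‖ -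
      ‖(T.orthogonalProjectionOnto b : EuclideanSpace ℝ (Fin d))‖ ≤
      ‖((T.orthogonalProjectionOnto a : EuclideanSpace ℝ (Fin d)) -
        (T.orthogonalProjectionOnto b : EuclideanSpace ℝ (Fin d)))‖ := norm_sub_norm_le _ _
  have h2 : (T.orthogonalProjectionOnto a : EuclideanSpace ℝ (Fin d)) -
      (T.orthogonalProjectionOnto b : EuclideanSpace ℝ (Fin d)) =
      (T.orthogonalProjectionOnto (a - b) : EuclideanSpace ℝ (Fin d)) := by
    rw [map_sub]; rfl
  have h3 := proj_norm_le T (a - b)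
  rw [h2] at h1
  linarith

lemma core {k d : ℕ} (B₁ B₂ : Matrix (Fin k) (Fin d) ℝ)
    (h₁ : B₁ * B₁ᵀ = 1) (h₂ : B₂ * B₂ᵀ = 1)
    (U : Matrix (Fin k) (Fin k) ℝ) (hU : Uᵀ * U = 1)
    (c : Fin k → ℝ) (hc : enorm2 c = 1) :
    toE (B₁ᵀ *ᵥ (Uᵀ *ᵥ c)) ∈ rowspace B₁ ∧ toE (B₂ᵀ *ᵥ c) ∈ rowspace B₂ ∧
    ‖toE (B₁ᵀ *ᵥ (Uᵀ *ᵥ c))‖ = 1 ∧ ‖toE (B₂ᵀ *ᵥ c)‖ = 1 ∧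
    ‖toE (B₁ᵀ *ᵥ (Uᵀ *ᵥ c)) - toE (B₂ᵀ *ᵥ c)‖ ≤ specNorm (U * B₁ - B₂) := by
  have hUU : U * Uᵀ = 1 := mul_eq_one_comm.mp hU
  have hrw : B₁ᵀ *ᵥ (Uᵀ *ᵥ c) = (U * B₁)ᵀ *ᵥ c := by
    rw [transpose_mul, mulVec_mulVec]
  have horth : (U * B₁) * (U * B₁)ᵀ = 1 := by
    rw [transpose_mul, Matrix.mul_assoc, ← Matrix.mul_assoc B₁, h₁, Matrix.one_mul, hUU]
  refine ⟨mem_rowspace.mpr ⟨Uᵀ *ᵥ c, rfl⟩, mem_rowspace.mpr ⟨c, rfl⟩, ?_, ?_, ?_⟩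
  · show enorm2 _ = 1
    rw [hrw, enorm2_mulVec_orth _ horth c, hc]
  · show enorm2 _ = 1
    rw [enorm2_mulVec_orth _ h₂ c, hc]
  · have hsub : toE (B₁ᵀ *ᵥ (Uᵀ *ᵥ c)) - toE (B₂ᵀ *ᵥ c) = toE ((U * B₁ - B₂)ᵀ *ᵥ c) := by
      rw [hrw, transpose_sub, sub_mulVec]; rfl
    rw [hsub]
    exact enorm2_transpose_mulVec_le _ c hc

lemma cangle_bddBelow {d : ℕ} (R T : Submodule ℝ (EuclideanSpace ℝ (Fin d))) :
    BddBelow {c | ∃ r ∈ R, ‖r‖ = 1 ∧ c = ‖(T.orthogonalProjectionOnto r : EuclideanSpace ℝ (Fin d))‖} :=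
  ⟨0, by rintro c ⟨r, _, _, rfl⟩; exact norm_nonneg _⟩

lemma cangle_set_nonempty {k d : ℕ} (hk : 0 < k) (B : Matrix (Fin k) (Fin d) ℝ)
    (h : B * Bᵀ = 1) (T : Submodule ℝ (EuclideanSpace ℝ (Fin d))) :
    {c | ∃ r ∈ rowspace B, ‖r‖ = 1 ∧
      c = ‖(T.orthogonalProjectionOnto r : EuclideanSpace ℝ (Fin d))‖}.Nonempty := by
  set c0 : Fin k → ℝ := Pi.single ⟨0, hk⟩ 1 with hc0
  have hc0n : enorm2 c0 = 1 := by
    have : enorm2 c0 = ‖EuclideanSpace.single (⟨0, hk⟩ : Fin k) (1 : ℝ)‖ := rfl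
    rw [this, EuclideanSpace.norm_single]; norm_num
  refine ⟨_, toE (Bᵀ *ᵥ c0), mem_rowspace.mpr ⟨c0, rfl⟩, ?_, rfl⟩
  show enorm2 _ = 1
  rw [enorm2_mulVec_orth _ h c0, hc0n]

lemma cangle_dir {k d : ℕ} (hk : 0 < k) (B₁ B₂ : Matrix (Fin k) (Fin d) ℝ)
    (h₁ : B₁ * B₁ᵀ = 1) (h₂ : B₂ * B₂ᵀ = 1)
    (T : Submodule ℝ (EuclideanSpace ℝ (Fin d)))
    (U : Matrix (Fin k) (Fin k) ℝ) (hU : Uᵀ * U = 1) :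
    cangle (rowspace B₁) T ≤ cangle (rowspace B₂) T + specNorm (U * B₁ - B₂) := by
  have key : ∀ b ∈ {c | ∃ r ∈ rowspace B₂, ‖r‖ = 1 ∧
      c = ‖(T.orthogonalProjectionOnto r : EuclideanSpace ℝ (Fin d))‖},
      cangle (rowspace B₁) T - specNorm (U * B₁ - B₂) ≤ b := by
    rintro b ⟨r₂, hm, hn, rfl⟩
    obtain ⟨c, rfl⟩ := mem_rowspace.mp hm
    have hc : enorm2 c = 1 := by rw [← enorm2_mulVec_orth B₂ h₂ c]; exact hn
    obtain ⟨m₁, _, n₁, _, hd⟩ := core B₁ B₂ h₁ h₂ U hU c hc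
    have hle : cangle (rowspace B₁) T ≤
        ‖(T.orthogonalProjectionOnto (toE (B₁ᵀ *ᵥ (Uᵀ *ᵥ c))) : EuclideanSpace ℝ (Fin d))‖ :=
      csInf_le (cangle_bddBelow _ _) ⟨_, m₁, n₁, rfl⟩
    have hlip := proj_lip T (toE (B₁ᵀ *ᵥ (Uᵀ *ᵥ c))) (toE (B₂ᵀ *ᵥ c))
    linarith
  have h := le_csInf (cangle_set_nonempty hk B₂ h₂ T) key
  have h' : cangle (rowspace B₁) T - specNorm (U * B₁ - B₂) ≤ cangle (rowspace B₂) T := h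
  linarith

lemma cangle_dir' {k d : ℕ} (hk : 0 < k) (B₁ B₂ : Matrix (Fin k) (Fin d) ℝ)
    (h₁ : B₁ * B₁ᵀ = 1) (h₂ : B₂ * B₂ᵀ = 1)
    (T : Submodule ℝ (EuclideanSpace ℝ (Fin d)))
    (U : Matrix (Fin k) (Fin k) ℝ) (hU : Uᵀ * U = 1) :
    cangle (rowspace B₂) T ≤ cangle (rowspace B₁) T + specNorm (U * B₁ - B₂) := by
  have key : ∀ b ∈ {c | ∃ r ∈ rowspace B₁, ‖r‖ = 1 ∧
      c = ‖(T.orthogonalProjectionOnto r : EuclideanSpace ℝ (Fin d))‖},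
      cangle (rowspace B₂) T - specNorm (U * B₁ - B₂) ≤ b := by
    rintro b ⟨r₁, hm, hn, rfl⟩
    obtain ⟨c₁, rfl⟩ := mem_rowspace.mp hm
    have hc₁ : enorm2 c₁ = 1 := by rw [← enorm2_mulVec_orth B₁ h₁ c₁]; exact hn
    have hc : enorm2 (U *ᵥ c₁) = 1 := by
      have h := enorm2_mulVec_orth Uᵀ (by rwa [transpose_transpose]) c₁
      rwa [transpose_transpose, hc₁] at h
    obtain ⟨_, m₂, _, n₂, hd⟩ := core B₁ B₂ h₁ h₂ U hU (U *ᵥ c₁) hc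
    have hback : Uᵀ *ᵥ (U *ᵥ c₁) = c₁ := by rw [mulVec_mulVec, hU, one_mulVec]
    rw [hback] at hd
    have hle : cangle (rowspace B₂) T ≤
        ‖(T.orthogonalProjectionOnto (toE (B₂ᵀ *ᵥ (U *ᵥ c₁))) : EuclideanSpace ℝ (Fin d))‖ :=
      csInf_le (cangle_bddBelow _ _) ⟨_, m₂, n₂, rfl⟩
    have hlip := proj_lip T (toE (B₂ᵀ *ᵥ (U *ᵥ c₁))) (toE (B₁ᵀ *ᵥ c₁))
    rw [norm_sub_rev] at hlip
    linarith
  have h := le_csInf (cangle_set_nonempty hk B₁ h₁ T) key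
  have h' : cangle (rowspace B₂) T - specNorm (U * B₁ - B₂) ≤ cangle (rowspace B₁) T := h
  linarith

lemma cangle_rowspace_zero {d : ℕ} (B : Matrix (Fin 0) (Fin d) ℝ)
    (T : Submodule ℝ (EuclideanSpace ℝ (Fin d))) : cangle (rowspace B) T = 0 := by
  have hempty : {c | ∃ r ∈ rowspace B, ‖r‖ = 1 ∧
      c = ‖(T.orthogonalProjectionOnto r : EuclideanSpace ℝ (Fin d))‖} = ∅ := by
    ext c
    simp only [Set.mem_setOf_eq, Set.mem_empty_iff_false, iff_false, not_exists]
    rintro r ⟨hm, hn, _⟩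
    obtain ⟨cc, rfl⟩ := mem_rowspace.mp hm
    have hz : Bᵀ *ᵥ cc = 0 := by
      funext j; simp [Matrix.mulVec, dotProduct]
    rw [show (‖toE (Bᵀ *ᵥ cc)‖ : ℝ) = enorm2 (Bᵀ *ᵥ cc) from rfl, hz] at hn
    have : enorm2 (0 : Fin d → ℝ) = 0 := norm_zero
    rw [this] at hn
    norm_num at hn
  rw [cangle, hempty, Real.sInf_empty]

/-- the principal angle between row spaces and a fixed subspace `T` is
Lipschitz in the feature extractor: for every orthogonal `U`,
`|cangle(rowspace B₁, T) − cangle(rowspace B₂, T)| ≤ ‖U B₁ − B₂‖₂`, hence the difference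
is at most the feature-extractor distance `d(B₁, B₂)`. -/
theorem stmt_8 {k d : ℕ} (B₁ B₂ : Matrix (Fin k) (Fin d) ℝ)
    (h₁ : B₁ * B₁ᵀ = 1) (h₂ : B₂ * B₂ᵀ = 1)
    (T : Submodule ℝ (EuclideanSpace ℝ (Fin d)))
    (hT : k ≤ Module.finrank ℝ T) :
    (∀ U : Matrix (Fin k) (Fin k) ℝ, Uᵀ * U = 1 →
      |cangle (rowspace B₁) T - cangle (rowspace B₂) T| ≤ specNorm (U * B₁ - B₂)) ∧
    |cangle (rowspace B₁) T - cangle (rowspace B₂) T| ≤ fdist B₁ B₂ := by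
  have part1 : ∀ U : Matrix (Fin k) (Fin k) ℝ, Uᵀ * U = 1 →
      |cangle (rowspace B₁) T - cangle (rowspace B₂) T| ≤ specNorm (U * B₁ - B₂) := by
    intro U hU
    obtain rfl | hk := Nat.eq_zero_or_pos k
    · rw [cangle_rowspace_zero B₁ T, cangle_rowspace_zero B₂ T]
      simpa using specNorm_nonneg (U * B₁ - B₂)
    · rw [abs_sub_le_iff]
      constructor
      · linarith [cangle_dir hk B₁ B₂ h₁ h₂ T U hU]
      · linarith [cangle_dir' hk B₁ B₂ h₁ h₂ T U hU]
  refine ⟨part1, ?_⟩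
  apply le_csInf
  · exact ⟨specNorm (1 * B₁ - B₂), 1, by simp, rfl⟩
  · rintro b ⟨U, hU, rfl⟩
    exact part1 U hU

end
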